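/- Let Q be a bounded sublinear rate operator on ℬ, and for each t ≥ 0 let e^{tQ} denote the limit in operator seminorm of the sequence ((I + (t/n)Q)^n)_{n∈ℕ}. Then for every t ≥ 0, the sequence (n(e^{(t/n)Q} − I))_{n∈ℕ} converges in operator seminorm to tQ; that is, the operator logarithm of e^{tQ} equals tQ. -/

import Mathlib

open Filter Topology BoundedContinuousFunction ENNReal NNReal

/-- The space of (possibly nonlinear) operators on the Banach space `X →ᵇ ℝ`
of bounded (continuous, i.e. with `X` discrete: all) real-valued functions. -/
abbrev Op (X : Type*) [TopologicalSpace X] :=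
  BoundedContinuousFunction X ℝ → BoundedContinuousFunction X ℝ

/-- The operator seminorm `‖A‖ = sup {‖A f‖/‖f‖ : f ≠ 0}`, a value in `[0,∞]`. -/
noncomputable def opSemiNorm {X : Type*} [TopologicalSpace X] (A : Op X) : ℝ≥0∞ :=
  ⨆ (f : BoundedContinuousFunction X ℝ) (_ : f ≠ 0), (‖A f‖₊ : ℝ≥0∞) / (‖f‖₊ : ℝ≥0∞)

/-- The operator norm distance `d(A,B) = ‖A 0 − B 0‖∞ + ‖A − B‖`. -/
noncomputable def opDist {X : Type*} [TopologicalSpace X] (A B : Op X) : ℝ≥0∞ :=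
  (‖A 0 - B 0‖₊ : ℝ≥0∞) + opSemiNorm (A - B)

/-- Sublinear transition operator: (T1) positive homogeneity, (T2) subadditivity,
(T3) `T f ≤ sup f` pointwise. -/
def IsSublinearTransition {X : Type*} [TopologicalSpace X] (T : Op X) : Prop :=
  (∀ (c : ℝ), 0 ≤ c → ∀ f, T (c • f) = c • T f) ∧
  (∀ f g, ∀ x, T (f + g) x ≤ T f x + T g x) ∧
  (∀ f, ∀ x, T f x ≤ ⨆ y, f y)

/-- Sublinear rate operator: (Q1) positive homogeneity, (Q2) subadditivity,
(Q3) constants map to zero, (Q4) positive maximum principle. -/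
def IsSublinearRate {X : Type*} [TopologicalSpace X] (Q : Op X) : Prop :=
  (∀ (c : ℝ), 0 ≤ c → ∀ f, Q (c • f) = c • Q f) ∧
  (∀ f g, ∀ x, Q (f + g) x ≤ Q f x + Q g x) ∧
  (∀ (c : ℝ), Q (BoundedContinuousFunction.const X c) = 0) ∧
  (∀ f, ∀ x : X, (⨆ y, f y) = f x → 0 ≤ f x → Q f x ≤ 0)

/-- The Euler approximation `(I + (t/n) Q)^n` (n-fold composition). -/
noncomputable def euler {X : Type*} [TopologicalSpace X] (Q : Op X) (t : ℝ) (n : ℕ) : Op X :=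
  (fun f => f + (t / (n : ℝ)) • Q f)^[n]

/-- Uniform continuity of a semigroup `(S_t)_{t ≥ 0}`:
`‖S_s − S_t‖ → 0` as `s → t` (within `s ≥ 0`), for every `t ≥ 0`. -/
def IsUniformlyContinuousSG {X : Type*} [TopologicalSpace X] (S : ℝ → Op X) : Prop :=
  ∀ t : ℝ, 0 ≤ t →
    Tendsto (fun s => opSemiNorm (S s - S t)) (nhdsWithin t (Set.Ici 0)) (nhds 0)

/-- The indicator function `1_x` of the singleton `{x}`. -/
noncomputable def indic {X : Type*} [TopologicalSpace X] [DiscreteTopology X] (x : X) :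
    BoundedContinuousFunction X ℝ :=
  BoundedContinuousFunction.ofNormedAddCommGroup
    (Set.indicator {x} (fun _ => (1 : ℝ))) continuous_of_discreteTopology 1
    (by
      intro y
      classical
      rw [Set.indicator_apply]
      split_ifs <;> simp)

/-- Downward continuity (continuity from above) of an operator. -/
def DownwardContinuous {X : Type*} [TopologicalSpace X] (A : Op X) : Prop :=
  ∀ (f : ℕ → BoundedContinuousFunction X ℝ) (g : BoundedContinuousFunction X ℝ),
    (∀ n x, f (n + 1) x ≤ f n x) →
    (∀ x, Tendsto (fun n => f n x) atTop (nhds (g x))) →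
    ∀ x, Tendsto (fun n => A (f n) x) atTop (nhds (A g x))

section AuxLemmas
variable {X : Type*} [TopologicalSpace X]

lemma opSemiNorm_le_ofReal (A : Op X) {c : ℝ} (hc : 0 ≤ c)
    (h : ∀ f, ‖A f‖ ≤ c * ‖f‖) : opSemiNorm A ≤ ENNReal.ofReal c := by
  refine iSup₂_le fun f hf => ?_
  rw [ENNReal.div_le_iff (by simpa using hf) ENNReal.coe_ne_top,
    ← enorm_eq_nnnorm, ← ofReal_norm, ← enorm_eq_nnnorm, ← ofReal_norm, ← ENNReal.ofReal_mul hc]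
  exact ENNReal.ofReal_le_ofReal (h f)

lemma norm_le_of_opSemiNorm (A : Op X) {c : ℝ} (hc : 0 ≤ c)
    (h : opSemiNorm A ≤ ENNReal.ofReal c) (f : BoundedContinuousFunction X ℝ)
    (hf : f ≠ 0) : ‖A f‖ ≤ c * ‖f‖ := by
  have h1 : (‖A f‖₊ : ℝ≥0∞) / (‖f‖₊ : ℝ≥0∞) ≤ ENNReal.ofReal c :=
    le_trans (le_iSup₂ (f := fun g (_ : g ≠ 0) => (‖A g‖₊ : ℝ≥0∞) / (‖g‖₊ : ℝ≥0∞)) f hf) h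
  rw [ENNReal.div_le_iff (by simpa using hf) ENNReal.coe_ne_top,
    ← enorm_eq_nnnorm, ← ofReal_norm, ← enorm_eq_nnnorm, ← ofReal_norm, ← ENNReal.ofReal_mul hc] at h1
  exact (ENNReal.ofReal_le_ofReal_iff (mul_nonneg hc (norm_nonneg f))).1 h1

lemma opSemiNorm_add_le (A B C : Op X) (h : ∀ f, A f = B f + C f) :
    opSemiNorm A ≤ opSemiNorm B + opSemiNorm C := by
  refine iSup₂_le fun f hf => ?_
  calc (‖A f‖₊ : ℝ≥0∞) / ‖f‖₊ ≤ ((‖B f‖₊ + ‖C f‖₊ : ℝ≥0) : ℝ≥0∞) / ‖f‖₊ := by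
        gcongr
        exact_mod_cast (h f ▸ nnnorm_add_le (B f) (C f))
    _ = (‖B f‖₊ : ℝ≥0∞) / ‖f‖₊ + (‖C f‖₊ : ℝ≥0∞) / ‖f‖₊ := by
        rw [ENNReal.coe_add, ENNReal.add_div]
    _ ≤ opSemiNorm B + opSemiNorm C := by
        gcongr
        · exact le_iSup₂ (f := fun g (_ : g ≠ 0) => (‖B g‖₊ : ℝ≥0∞) / (‖g‖₊ : ℝ≥0∞)) f hf
        · exact le_iSup₂ (f := fun g (_ : g ≠ 0) => (‖C g‖₊ : ℝ≥0∞) / (‖g‖₊ : ℝ≥0∞)) f hf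

lemma opSemiNorm_sub_comm (A B : Op X) : opSemiNorm (A - B) = opSemiNorm (B - A) := by
  have h : ∀ f, (‖(A - B) f‖₊ : ℝ≥0∞) = (‖(B - A) f‖₊ : ℝ≥0∞) := fun f => by
    have : (A - B) f = -((B - A) f) := by
      show A f - B f = -(B f - A f)
      abel
    rw [this, nnnorm_neg]
  simp only [opSemiNorm, h]

lemma euler_estimate (Q : Op X) {M : ℝ} (hM : 0 ≤ M)
    (hQM : ∀ f, ‖Q f‖ ≤ M * ‖f‖)
    (hLip : ∀ f g, ‖Q f - Q g‖ ≤ M * ‖f - g‖)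
    {s : ℝ} (hs : 0 ≤ s) {m : ℕ} (hm : 1 ≤ m) (f : BoundedContinuousFunction X ℝ) :
    ‖euler Q s m f - (f + s • Q f)‖ ≤ s ^ 2 * M ^ 2 * Real.exp (s * M) * ‖f‖ := by
  have hm0 : (m : ℝ) ≠ 0 := Nat.cast_ne_zero.2 (by omega)
  set h : ℝ := s / m with hh_def
  have hh : 0 ≤ h := div_nonneg hs (Nat.cast_nonneg m)
  set U : Op X := fun g => g + h • Q g with hU
  have hB1 : (1:ℝ) ≤ 1 + h * M := le_add_of_nonneg_right (mul_nonneg hh hM)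
  set B : ℝ := (1 + h * M) ^ m with hB_def
  have hB1' : (1:ℝ) ≤ B := one_le_pow₀ hB1
  have hsm : ∀ g : BoundedContinuousFunction X ℝ, ‖h • g‖ = h * ‖g‖ := fun g => by
    rw [norm_smul h g, Real.norm_of_nonneg hh]
  have key_a : ∀ k, ‖U^[k] f‖ ≤ (1 + h * M) ^ k * ‖f‖ := by
    intro k
    induction k with
    | zero => simp
    | succ k ih =>
      rw [Function.iterate_succ_apply']
      calc ‖U (U^[k] f)‖ = ‖U^[k] f + h • Q (U^[k] f)‖ := rfl
        _ ≤ ‖U^[k] f‖ + h * ‖Q (U^[k] f)‖ := by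
            refine (norm_add_le _ _).trans ?_
            rw [hsm]
        _ ≤ ‖U^[k] f‖ + h * (M * ‖U^[k] f‖) := by gcongr; exact hQM _
        _ = (1 + h * M) * ‖U^[k] f‖ := by ring
        _ ≤ (1 + h * M) * ((1 + h * M) ^ k * ‖f‖) :=
            mul_le_mul_of_nonneg_left ih (by linarith)
        _ = (1 + h * M) ^ (k + 1) * ‖f‖ := by ring
  have key_a' : ∀ k ≤ m, ‖U^[k] f‖ ≤ B * ‖f‖ := by
    intro k hk
    refine (key_a k).trans ?_
    gcongr
    exact pow_le_pow_right₀ hB1 hk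
  have key_b : ∀ k ≤ m, ‖U^[k] f - f‖ ≤ (k : ℝ) * (h * M * (B * ‖f‖)) := by
    intro k hk
    induction k with
    | zero => simp
    | succ k ih =>
      have hk' : k ≤ m := Nat.le_of_succ_le hk
      rw [Function.iterate_succ_apply']
      have heq : U (U^[k] f) - f = (U^[k] f - f) + h • Q (U^[k] f) := by
        show U^[k] f + h • Q (U^[k] f) - f = _
        abel
      rw [heq]
      calc ‖(U^[k] f - f) + h • Q (U^[k] f)‖
          ≤ ‖U^[k] f - f‖ + h * ‖Q (U^[k] f)‖ := by
            refine (norm_add_le _ _).trans ?_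
            rw [hsm]
        _ ≤ (k : ℝ) * (h * M * (B * ‖f‖)) + h * (M * (B * ‖f‖)) := by
            gcongr
            · exact ih hk'
            · exact (hQM _).trans (by gcongr; exact key_a' k hk')
        _ = ((k : ℕ) + 1 : ℝ) * (h * M * (B * ‖f‖)) := by ring
        _ = ((k + 1 : ℕ) : ℝ) * (h * M * (B * ‖f‖)) := by push_cast; ring
  have key_c : ∀ k ≤ m, ‖U^[k] f - (f + ((k : ℝ) * h) • Q f)‖ ≤
      (k : ℝ) ^ 2 * (h ^ 2 * M ^ 2 * (B * ‖f‖)) := by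
    intro k hk
    induction k with
    | zero => simp
    | succ k ih =>
      have hk' : k ≤ m := Nat.le_of_succ_le hk
      rw [Function.iterate_succ_apply']
      have heq : U (U^[k] f) - (f + (((k:ℕ) + 1 : ℝ) * h) • Q f) =
          (U^[k] f - (f + ((k : ℝ) * h) • Q f)) + h • (Q (U^[k] f) - Q f) := by
        show U^[k] f + h • Q (U^[k] f) - (f + (((k:ℕ) + 1 : ℝ) * h) • Q f) = _
        rw [smul_sub, add_mul, one_mul, add_smul]
        abel
      have hcast : ((k + 1 : ℕ) : ℝ) = (k : ℝ) + 1 := by push_cast; ring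
      rw [hcast, heq]
      calc ‖(U^[k] f - (f + ((k : ℝ) * h) • Q f)) + h • (Q (U^[k] f) - Q f)‖
          ≤ ‖U^[k] f - (f + ((k : ℝ) * h) • Q f)‖ + h * ‖Q (U^[k] f) - Q f‖ := by
            refine (norm_add_le _ _).trans ?_
            rw [hsm]
        _ ≤ (k : ℝ) ^ 2 * (h ^ 2 * M ^ 2 * (B * ‖f‖)) +
              h * (M * ((k : ℝ) * (h * M * (B * ‖f‖)))) := by
            gcongr
            · exact ih hk'
            · exact (hLip _ _).trans (by gcongr; exact key_b k hk')
        _ = ((k : ℝ) ^ 2 + (k : ℝ)) * (h ^ 2 * M ^ 2 * (B * ‖f‖)) := by ring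
        _ ≤ ((k : ℝ) + 1) ^ 2 * (h ^ 2 * M ^ 2 * (B * ‖f‖)) := by
            have hk0 : (0:ℝ) ≤ (k:ℝ) := Nat.cast_nonneg k
            have h1 : (k : ℝ) ^ 2 + (k : ℝ) ≤ ((k : ℝ) + 1) ^ 2 := by nlinarith
            exact mul_le_mul_of_nonneg_right h1 (by positivity)
  have hmh : (m : ℝ) * h = s := by
    rw [hh_def]; field_simp
  have hBexp : B ≤ Real.exp (s * M) := by
    have h1 : 1 + h * M ≤ Real.exp (h * M) := by
      have := Real.add_one_le_exp (h * M); linarith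
    calc B ≤ (Real.exp (h * M)) ^ m := pow_le_pow_left₀ (by positivity) h1 m
      _ = Real.exp ((m : ℝ) * (h * M)) := (Real.exp_nat_mul _ m).symm
      _ = Real.exp (s * M) := by rw [← mul_assoc, hmh]
  have hfinal := key_c m le_rfl
  rw [hmh] at hfinal
  have : euler Q s m f = U^[m] f := rfl
  rw [this]
  refine hfinal.trans ?_
  have heq2 : (m : ℝ) ^ 2 * (h ^ 2 * M ^ 2 * (B * ‖f‖)) = s ^ 2 * M ^ 2 * B * ‖f‖ := by
    rw [← hmh]; ring
  rw [heq2]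
  have hb : s ^ 2 * M ^ 2 * B ≤ s ^ 2 * M ^ 2 * Real.exp (s * M) :=
    mul_le_mul_of_nonneg_left hBexp (by positivity)
  exact mul_le_mul_of_nonneg_right hb (norm_nonneg f)

end AuxLemmas

theorem stmt_16 {X : Type*} [Countable X] [TopologicalSpace X] [DiscreteTopology X]
    (Q : Op X) (hQ : IsSublinearRate Q) (hQb : opSemiNorm Q ≠ ⊤)
    (E : ℝ → Op X)
    (hE : ∀ t : ℝ, 0 ≤ t → Tendsto (fun n => opDist (euler Q t n) (E t)) atTop (nhds 0))
    (t : ℝ) (ht : 0 ≤ t) :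
    Tendsto (fun n : ℕ => opSemiNorm ((n : ℝ) • (E (t / n) - id) - t • Q)) atTop (nhds 0) := by
  -- the bound M on Q
  set M : ℝ := (opSemiNorm Q).toReal with hM_def
  have hM : 0 ≤ M := ENNReal.toReal_nonneg
  have hQof : opSemiNorm Q ≤ ENNReal.ofReal M := by
    rw [hM_def, ENNReal.ofReal_toReal hQb]
  have hQ0 : Q 0 = 0 := by
    have := hQ.1 0 le_rfl 0
    simpa using this
  have hQM : ∀ f, ‖Q f‖ ≤ M * ‖f‖ := by
    intro f
    by_cases hf : f = 0
    · simp [hf, hQ0]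
    · exact norm_le_of_opSemiNorm Q hM hQof f hf
  have hLip : ∀ f g, ‖Q f - Q g‖ ≤ M * ‖f - g‖ := by
    intro f g
    have key : ∀ a b : BoundedContinuousFunction X ℝ, ∀ x, Q a x - Q b x ≤ M * ‖a - b‖ := by
      intro a b x
      have h1 : Q a x ≤ Q (a - b) x + Q b x := by
        have := hQ.2.1 (a - b) b x
        rwa [sub_add_cancel] at this
      have h2 : Q (a - b) x ≤ M * ‖a - b‖ := by
        calc Q (a - b) x ≤ ‖Q (a - b) x‖ := le_abs_self _
          _ ≤ ‖Q (a - b)‖ := BoundedContinuousFunction.norm_coe_le_norm _ x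
          _ ≤ M * ‖a - b‖ := hQM _
      linarith
    refine (BoundedContinuousFunction.norm_le (mul_nonneg hM (norm_nonneg _))).2 fun x => ?_
    rw [BoundedContinuousFunction.coe_sub, Pi.sub_apply, Real.norm_eq_abs, abs_le]
    constructor
    · have := key g f x
      rw [norm_sub_rev] at this
      linarith
    · exact key f g x
  -- the dominating sequence
  set C : ℝ := t ^ 2 * M ^ 2 * Real.exp (t * M) with hC_def
  have hC : 0 ≤ C := by positivity
  have hdom : Tendsto (fun n : ℕ => ENNReal.ofReal (C / n)) atTop (nhds 0) := by
    have h1 : Tendsto (fun n : ℕ => C / (n : ℝ)) atTop (nhds 0) :=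
      tendsto_const_div_atTop_nhds_zero_nat C
    have h2 := ENNReal.tendsto_ofReal h1
    simpa using h2
  refine tendsto_of_tendsto_of_tendsto_of_le_of_le' tendsto_const_nhds hdom
    (Eventually.of_forall fun n => zero_le) ?_
  filter_upwards [eventually_ge_atTop 1] with n hn
  have hn0 : (n : ℝ) ≠ 0 := Nat.cast_ne_zero.2 (by omega)
  have hn1 : (1:ℝ) ≤ (n : ℝ) := by exact_mod_cast hn
  set s : ℝ := t / n with hs_def
  have hs : 0 ≤ s := div_nonneg ht (Nat.cast_nonneg n)
  set c : ℝ := s ^ 2 * M ^ 2 * Real.exp (s * M) with hc_def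
  have hc : 0 ≤ c := by positivity
  set A : Op X := fun f => f + s • Q f with hA_def
  -- Step A : ‖E s − A‖ ≤ c
  have stepA : opSemiNorm (E s - A) ≤ ENNReal.ofReal c := by
    have hev : ∀ᶠ m in atTop,
        opSemiNorm (E s - A) ≤ opDist (euler Q s m) (E s) + ENNReal.ofReal c := by
      filter_upwards [eventually_ge_atTop 1] with m hm
      have h1 : opSemiNorm (E s - A) ≤
          opSemiNorm (E s - euler Q s m) + opSemiNorm (euler Q s m - A) := by
        refine opSemiNorm_add_le _ _ _ fun f => ?_
        show E s f - A f = (E s f - euler Q s m f) + (euler Q s m f - A f)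
        abel
      refine h1.trans (add_le_add ?_ ?_)
      · rw [opSemiNorm_sub_comm]
        exact self_le_add_left _ _
      · refine opSemiNorm_le_ofReal _ hc fun f => ?_
        exact euler_estimate Q hM hQM hLip hs hm f
    have htend : Tendsto (fun m : ℕ => opDist (euler Q s m) (E s) + ENNReal.ofReal c)
        atTop (nhds (ENNReal.ofReal c)) := by
      have := (hE s hs).add (tendsto_const_nhds (x := ENNReal.ofReal c) (f := atTop))
      simpa using this
    exact ge_of_tendsto htend hev
  -- Step B : bound the goal
  have hns : (n : ℝ) * s = t := by rw [hs_def]; field_simp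
  have hFle : opSemiNorm ((n : ℝ) • (E s - id) - t • Q) ≤ (n : ℝ≥0∞) * opSemiNorm (E s - A) := by
    refine iSup₂_le fun f hf => ?_
    have heq : (((n : ℝ) • (E s - id) - t • Q : Op X)) f = (n : ℝ) • ((E s - A) f) := by
      show (n : ℝ) • (E s f - f) - t • Q f = (n : ℝ) • (E s f - (f + s • Q f))
      rw [← hns]
      module
    rw [heq]
    have hnn : ‖(n : ℝ) • ((E s - A) f)‖₊ = (n : ℝ≥0) * ‖(E s - A) f‖₊ := by
      rw [nnnorm_smul ((n : ℝ)) ((E s - A) f)]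
      congr 1
      simp
    rw [hnn, ENNReal.coe_mul, mul_div_assoc]
    have : ((n : ℝ≥0) : ℝ≥0∞) = (n : ℝ≥0∞) := by simp
    rw [this]
    gcongr
    exact le_iSup₂ (f := fun g (_ : g ≠ 0) => (‖(E s - A) g‖₊ : ℝ≥0∞) / (‖g‖₊ : ℝ≥0∞)) f hf
  refine hFle.trans ?_
  calc (n : ℝ≥0∞) * opSemiNorm (E s - A) ≤ (n : ℝ≥0∞) * ENNReal.ofReal c := by
        gcongr
    _ = ENNReal.ofReal ((n : ℝ) * c) := by
        rw [ENNReal.ofReal_mul (Nat.cast_nonneg n), ENNReal.ofReal_natCast]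
    _ ≤ ENNReal.ofReal (C / n) := by
        apply ENNReal.ofReal_le_ofReal
        have hst : s ≤ t := by
          rw [hs_def]
          exact div_le_self ht hn1
        have hexp : Real.exp (s * M) ≤ Real.exp (t * M) :=
          Real.exp_le_exp.2 (mul_le_mul_of_nonneg_right hst hM)
        have h1 : (n : ℝ) * c = t ^ 2 * M ^ 2 * Real.exp (s * M) / n := by
          rw [hc_def, hs_def]; field_simp
        rw [h1, hC_def]
        gcongr
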